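/- A size-biased pick from a discrete stick-breaking process on [n] is uniformly distributed on {1, …, n}. That is, if S_n(0) is uniform on {1,…,n}, and inductively S_n(i) is uniform on {1, …, n − S_n(0) − ⋯ − S_n(i−1)} given the remainder is positive (and 0 otherwise), and if S̃_n is a size-biased pick from the resulting sequence, then P(S̃_n = k) = 1/n for every k ∈ {1,…,n}. -/

import Mathlib

open scoped ENNReal

/-- The discrete stick-breaking process on `[n]`: the first block size is
uniform on `{1,…,n}`, and inductively each block size is uniform on the
remaining total, until the total `n` is exhausted. The resulting random
sequence of block sizes is encoded as a `PMF` on lists. -/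
noncomputable def stickBreaking : ℕ → PMF (List ℕ)
  | 0 => PMF.pure []
  | (n + 1) =>
    (PMF.uniformOfFinset ((Finset.Icc 1 (n + 1)).attach)
      (Finset.attach_nonempty_iff.2 ⟨1, by simp⟩)).bind
      fun s => (stickBreaking (n + 1 - s.1)).map (List.cons s.1)
  decreasing_by
    have hs := s.2
    rw [Finset.mem_Icc] at hs
    omega

lemma tsum_pure_mul {α : Type*} (a : α) (g : α → ℝ≥0∞) :
    ∑' b, (PMF.pure a) b * g b = g a := by
  rw [tsum_eq_single a]
  · simp
  · intro b hb; simp [PMF.pure_apply, hb]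

lemma tsum_bind_mul {α β : Type*} (p : PMF α) (f : α → PMF β) (g : β → ℝ≥0∞) :
    ∑' b, (p.bind f) b * g b = ∑' a, p a * ∑' b, f a b * g b := by
  calc ∑' b, (p.bind f) b * g b
      = ∑' b, ∑' a, p a * f a b * g b := by
        refine tsum_congr fun b => ?_
        rw [PMF.bind_apply, ENNReal.tsum_mul_right]
    _ = ∑' a, ∑' b, p a * f a b * g b := ENNReal.tsum_comm
    _ = ∑' a, p a * ∑' b, f a b * g b := by
        refine tsum_congr fun a => ?_
        rw [← ENNReal.tsum_mul_left]
        simp [mul_assoc]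

lemma tsum_map_mul {α β : Type*} (p : PMF α) (f : α → β) (g : β → ℝ≥0∞) :
    ∑' b, (p.map f) b * g b = ∑' a, p a * g (f a) := by
  rw [PMF.map, tsum_bind_mul]
  exact tsum_congr fun a => by rw [Function.comp_apply, tsum_pure_mul]

lemma expCount (k : ℕ) (hk : 1 ≤ k) : ∀ n : ℕ,
    ∑' l : List ℕ, stickBreaking n l * (l.count k : ℝ≥0∞)
      = if k ≤ n then 1 / (k : ℝ≥0∞) else 0 := by
  intro n
  induction n using Nat.strong_induction_on with
  | _ n ih =>
    match n with
    | 0 =>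
      rw [stickBreaking, tsum_pure_mul]
      rw [if_neg (by omega)]
      simp
    | n + 1 =>
      rw [stickBreaking, tsum_bind_mul]
      have hcount : ∀ (s : ℕ) (r : List ℕ),
          (((s :: r).count k : ℕ) : ℝ≥0∞)
            = (r.count k : ℝ≥0∞) + (if k = s then 1 else 0) := by
        intro s r
        rcases eq_or_ne k s with h | h <;> simp [List.count_cons, h] <;> exact Ne.symm h
      have hinner : ∀ s : {x // x ∈ Finset.Icc 1 (n + 1)},
          ∑' l, ((stickBreaking (n + 1 - s.1)).map (List.cons s.1)) l * (l.count k : ℝ≥0∞)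
            = (if k ≤ n + 1 - s.1 then 1 / (k : ℝ≥0∞) else 0) + (if k = s.1 then 1 else 0) := by
        intro s
        have hs := s.2
        rw [Finset.mem_Icc] at hs
        rw [tsum_map_mul]
        calc ∑' r, stickBreaking (n + 1 - s.1) r * ((List.cons s.1 r).count k : ℝ≥0∞)
            = ∑' r, (stickBreaking (n + 1 - s.1) r * (r.count k : ℝ≥0∞)
                + stickBreaking (n + 1 - s.1) r * (if k = s.1 then 1 else 0)) := by
              refine tsum_congr fun r => ?_
              rw [hcount, mul_add]
          _ = (∑' r, stickBreaking (n + 1 - s.1) r * (r.count k : ℝ≥0∞))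
                + (∑' r, stickBreaking (n + 1 - s.1) r) * (if k = s.1 then 1 else 0) := by
              rw [ENNReal.tsum_add, ENNReal.tsum_mul_right]
          _ = (if k ≤ n + 1 - s.1 then 1 / (k : ℝ≥0∞) else 0) + (if k = s.1 then 1 else 0) := by
              rw [ih (n + 1 - s.1) (by omega), PMF.tsum_coe, one_mul]
      calc ∑' s : {x // x ∈ Finset.Icc 1 (n + 1)},
            (PMF.uniformOfFinset ((Finset.Icc 1 (n + 1)).attach)
              (Finset.attach_nonempty_iff.2 ⟨1, by simp⟩)) s *
            ∑' l, ((stickBreaking (n + 1 - s.1)).map (List.cons s.1)) l * (l.count k : ℝ≥0∞)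
          = ∑' s : {x // x ∈ Finset.Icc 1 (n + 1)}, ((n + 1 : ℝ≥0∞))⁻¹ *
              ((if k ≤ n + 1 - s.1 then 1 / (k : ℝ≥0∞) else 0) + (if k = s.1 then 1 else 0)) := by
            refine tsum_congr fun s => ?_
            rw [hinner s, PMF.uniformOfFinset_apply]
            simp [Finset.card_attach, Nat.card_Icc]
        _ = ((n + 1 : ℝ≥0∞))⁻¹ * ∑ x ∈ Finset.Icc 1 (n + 1),
              ((if k ≤ n + 1 - x then 1 / (k : ℝ≥0∞) else 0) + (if k = x then 1 else 0)) := by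
            rw [ENNReal.tsum_mul_left, tsum_fintype, Finset.univ_eq_attach,
              Finset.sum_attach (Finset.Icc 1 (n + 1))
                (fun x => (if k ≤ n + 1 - x then 1 / (k : ℝ≥0∞) else 0) + (if k = x then 1 else 0))]
        _ = ((n + 1 : ℝ≥0∞))⁻¹ * (((n + 1 - k : ℕ) : ℝ≥0∞) * (1 / k)
              + if k ≤ n + 1 then 1 else 0) := by
            congr 1
            rw [Finset.sum_add_distrib, Finset.sum_ite_eq]
            congr 1
            · rw [Finset.sum_ite, Finset.sum_const_zero, add_zero, Finset.sum_const]
              have : (Finset.Icc 1 (n + 1)).filter (fun x => k ≤ n + 1 - x)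
                  = Finset.Icc 1 (n + 1 - k) := by
                ext x
                simp only [Finset.mem_filter, Finset.mem_Icc]
                omega
              rw [this, Nat.card_Icc]
              simp [nsmul_eq_mul]
            · simp only [Finset.mem_Icc]
              congr 1
              simp only [eq_iff_iff]
              omega
        _ = if k ≤ n + 1 then 1 / (k : ℝ≥0∞) else 0 := by
            by_cases h : k ≤ n + 1
            · rw [if_pos h, if_pos h]
              have hk0 : (k : ℝ≥0∞) ≠ 0 := Nat.cast_ne_zero.2 (by omega)
              have hkt : (k : ℝ≥0∞) ≠ ⊤ := ENNReal.natCast_ne_top k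
              have h1 : (k : ℝ≥0∞) * (1 / k) = 1 := by
                rw [one_div, ENNReal.mul_inv_cancel hk0 hkt]
              have h2 : ((n + 1 - k : ℕ) : ℝ≥0∞) + (k : ℝ≥0∞) = ((n : ℝ≥0∞) + 1) := by
                rw [← Nat.cast_add, Nat.sub_add_cancel h]
                push_cast; ring
              have h3 : ((n + 1 - k : ℕ) : ℝ≥0∞) * (1 / k) + 1 = ((n : ℝ≥0∞) + 1) * (1 / k) := by
                calc ((n + 1 - k : ℕ) : ℝ≥0∞) * (1 / k) + 1
                    = ((n + 1 - k : ℕ) : ℝ≥0∞) * (1 / k) + (k : ℝ≥0∞) * (1 / k) := by rw [h1]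
                  _ = (((n + 1 - k : ℕ) : ℝ≥0∞) + (k : ℝ≥0∞)) * (1 / k) := (add_mul _ _ _).symm
                  _ = ((n : ℝ≥0∞) + 1) * (1 / k) := by rw [h2]
              rw [h3, ← mul_assoc, ENNReal.inv_mul_cancel (by simp) (by simp), one_mul]
            · rw [if_neg h, if_neg h]
              have : n + 1 - k = 0 := by omega
              simp [this]

/-- A size-biased pick from a discrete stick-breaking process on `[n]` is
uniform on `{1,…,n}`: the size-biased pick equals `k` with probability
`E[#{i : S_n(i) = k}·k/n]`, and this equals `1/n` for every `k ∈ {1,…,n}`. -/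
theorem stmt_6 (n : ℕ) (hn : 1 ≤ n) (k : ℕ) (hk : k ∈ Finset.Icc 1 n) :
    ∑' l : List ℕ, stickBreaking n l * ((l.count k : ℝ≥0∞) * k / n) = 1 / n := by
  rw [Finset.mem_Icc] at hk
  calc ∑' l : List ℕ, stickBreaking n l * ((l.count k : ℝ≥0∞) * k / n)
      = (∑' l : List ℕ, stickBreaking n l * (l.count k : ℝ≥0∞)) * ((k : ℝ≥0∞) / n) := by
        rw [← ENNReal.tsum_mul_right]
        refine tsum_congr fun l => ?_
        rw [mul_div_assoc, mul_assoc]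
    _ = (1 / (k : ℝ≥0∞)) * ((k : ℝ≥0∞) / n) := by
        rw [expCount k hk.1 n, if_pos hk.2]
    _ = 1 / n := by
        rw [one_div, div_eq_mul_inv, ← mul_assoc,
          ENNReal.inv_mul_cancel (Nat.cast_ne_zero.2 (by omega)) (ENNReal.natCast_ne_top k),
          one_mul, one_div]
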